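/- Fix τ ∈ ℝ and ω ∈ U, and let λ = λ(ω), the vectors v₋⁺, v₊⁺, v₊⁻ and the coefficients C, D be as in the context. Define η₋ : ℝ → ℂ² by η₋(x) = e^(λx)·v₋⁺ for x ≤ 0 and η₋(x) = C·e^(λx)·v₊⁺ + D·e^(-λx)·v₊⁻ for x > 0. Then η₋ is continuous on ℝ, differentiable at every x ≠ 0, satisfies the dislocated Dirac eigenvalue equation at parameter τ with spectral parameter ω at every x ≠ 0 (i.e. i·σ₃·η₋'(x) + σ₁·η₋(x) = ω·η₋(x) for x < 0 and i·σ₃·η₋'(x) + σ⋆(τ)·η₋(x) = ω·η₋(x) for x > 0), and η₋(x) → 0 as x → -∞. -/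

import Mathlib

open Complex Filter Matrix

/-- `U = ℂ \ ((-∞,-1] ∪ [1,∞))`. -/
def U : Set ℂ := {ω : ℂ | ω.im ≠ 0 ∨ (-1 < ω.re ∧ ω.re < 1)}

/-- `λ(ω) = (1-ω²)^(1/2)`, principal branch of the complex square root. -/
noncomputable def lam (ω : ℂ) : ℂ := (1 - ω ^ 2) ^ ((1 : ℂ) / 2)

/-- Pauli matrix σ₁. -/
def σ1 : Matrix (Fin 2) (Fin 2) ℂ := !![0, 1; 1, 0]

/-- Pauli matrix σ₃. -/
def σ3 : Matrix (Fin 2) (Fin 2) ℂ := !![1, 0; 0, -1]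

/-- σ⋆(τ) = [[0, e^(-iτ)],[e^(iτ), 0]]. -/
noncomputable def σstar (τ : ℝ) : Matrix (Fin 2) (Fin 2) ℂ :=
  !![0, Complex.exp (-(Complex.I * τ)); Complex.exp (Complex.I * τ), 0]

/-- The decaying solution η₋: equal to `e^(λx)·v₋⁺` for `x ≤ 0` and to
`C·e^(λx)·v₊⁺ + D·e^(-λx)·v₊⁻` for `x > 0`. -/
noncomputable def ηminus (τ : ℝ) (ω : ℂ) (x : ℝ) : Fin 2 → ℂ :=
  if x ≤ 0 then
    Complex.exp (lam ω * x) • ![1, ω - Complex.I * lam ω]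
  else
    ((ω * (Complex.exp (Complex.I * τ) - 1)
          + Complex.I * lam ω * (Complex.exp (Complex.I * τ) + 1)) / (2 * Complex.I * lam ω)
        * Complex.exp (lam ω * x)) • ![Complex.exp (-(Complex.I * τ)), ω - Complex.I * lam ω]
    + ((1 - Complex.exp (Complex.I * τ)) * (ω - Complex.I * lam ω) / (2 * Complex.I * lam ω)
        * Complex.exp (-(lam ω) * x)) • ![Complex.exp (-(Complex.I * τ)), ω + Complex.I * lam ω]

/- ### Auxiliary lemmas -/

lemma z_im_re_aux {ω : ℂ} (hω : ω ∈ U) : (1 - ω ^ 2).im = 0 → 0 < (1 - ω ^ 2).re := by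
  intro h
  simp [Complex.sub_im, Complex.sub_re, pow_two, Complex.mul_im, Complex.mul_re] at h ⊢
  rcases hω with h1 | h1
  · have : ω.re = 0 := by
      rcases mul_eq_zero.1 (by linarith : ω.re * ω.im = 0) with h' | h'
      · exact h'
      · exact absurd h' h1
    nlinarith [sq_nonneg ω.im]
  · nlinarith [sq_nonneg ω.im]

lemma z_ne_aux {ω : ℂ} (hω : ω ∈ U) : 1 - ω ^ 2 ≠ 0 := by
  intro h
  have h1 : (1 - ω ^ 2).im = 0 := by rw [h]; simp
  have := z_im_re_aux hω h1
  rw [h] at this; simp at this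

lemma lam_sq {ω : ℂ} (hω : ω ∈ U) : lam ω ^ 2 = 1 - ω ^ 2 := by
  have hz := z_ne_aux hω
  rw [lam, sq, ← Complex.cpow_add _ _ hz]
  norm_num

lemma lam_ne {ω : ℂ} (hω : ω ∈ U) : lam ω ≠ 0 := by
  intro h
  have := lam_sq hω
  rw [h] at this
  exact z_ne_aux hω (by simpa using this.symm)

lemma lam_re_pos {ω : ℂ} (hω : ω ∈ U) : 0 < (lam ω).re := by
  have hz := z_ne_aux hω
  have harg : (1 - ω ^ 2).arg ≠ Real.pi := by
    rw [Ne, Complex.arg_eq_pi_iff]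
    rintro ⟨h1, h2⟩
    exact absurd (z_im_re_aux hω h2) (by linarith)
  rw [lam, Complex.cpow_def_of_ne_zero hz, Complex.exp_re]
  apply mul_pos (Real.exp_pos _)
  have him : (Complex.log (1 - ω ^ 2) * (1 / 2)).im = (1 - ω ^ 2).arg / 2 := by
    simp [Complex.mul_im, Complex.log_im]
    ring
  rw [him]
  apply Real.cos_pos_of_mem_Ioo
  have h1 := Complex.neg_pi_lt_arg (1 - ω ^ 2)
  have h2 := lt_of_le_of_ne (Complex.arg_le_pi (1 - ω ^ 2)) harg
  constructor <;> [linarith; linarith]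

lemma hasDerivAt_aux (A c : ℂ) (v : Fin 2 → ℂ) (x : ℝ) :
    HasDerivAt (fun x : ℝ => (A * Complex.exp (c * x)) • v)
      ((A * c * Complex.exp (c * x)) • v) x := by
  have h : HasDerivAt (fun x : ℝ => (x : ℂ)) 1 x := Complex.ofRealCLM.hasDerivAt
  have h2 := (((h.const_mul c).cexp).const_mul A).smul_const v
  simpa [mul_comm, mul_assoc, mul_left_comm] using h2

lemma eq_left_aux (ω l X : ℂ) (hl : l ^ 2 = 1 - ω ^ 2) :
    Complex.I • σ3.mulVec ((l * X) • ![1, ω - Complex.I * l])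
      + σ1.mulVec (X • ![1, ω - Complex.I * l])
      = ω • (X • ![1, ω - Complex.I * l]) := by
  funext i
  fin_cases i <;>
    simp [σ1, σ3, Matrix.mulVec, dotProduct, Fin.sum_univ_two] <;>
    first
      | ring1
      | linear_combination (l ^ 2 * X) * Complex.I_sq - X * hl

lemma eq_right_aux (τ : ℝ) (ω l X s : ℂ) (hl : l ^ 2 = 1 - ω ^ 2) (hs2 : s ^ 2 = 1) :
    Complex.I • σ3.mulVec ((s * l * X) • ![Complex.exp (-(Complex.I * τ)), ω - s * Complex.I * l])
      + (σstar τ).mulVec (X • ![Complex.exp (-(Complex.I * τ)), ω - s * Complex.I * l])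
      = ω • (X • ![Complex.exp (-(Complex.I * τ)), ω - s * Complex.I * l]) := by
  have hE : Complex.exp (Complex.I * τ) * Complex.exp (-(Complex.I * τ)) = 1 := by
    rw [← Complex.exp_add]; simp
  funext i
  fin_cases i <;>
    simp [σstar, σ3, Matrix.mulVec, dotProduct, Fin.sum_univ_two] <;>
    first
      | ring1
      | linear_combination (s ^ 2 * l ^ 2 * X) * Complex.I_sq - X * hl + X * hE -
          (l ^ 2 * X) * hs2

lemma match_aux (τ : ℝ) (ω : ℂ) (hω : ω ∈ U) :
    ((ω * (Complex.exp (Complex.I * τ) - 1)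
          + Complex.I * lam ω * (Complex.exp (Complex.I * τ) + 1)) / (2 * Complex.I * lam ω))
        • ![Complex.exp (-(Complex.I * τ)), ω - Complex.I * lam ω]
    + ((1 - Complex.exp (Complex.I * τ)) * (ω - Complex.I * lam ω) / (2 * Complex.I * lam ω))
        • ![Complex.exp (-(Complex.I * τ)), ω + Complex.I * lam ω]
    = ![1, ω - Complex.I * lam ω] := by
  have hl := lam_sq hω
  have hlne := lam_ne hω
  have hE : Complex.exp (Complex.I * τ) * Complex.exp (-(Complex.I * τ)) = 1 := by
    rw [← Complex.exp_add]; simp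
  have hF : Complex.exp (-(Complex.I * τ)) = (Complex.exp (Complex.I * τ))⁻¹ :=
    Complex.exp_neg _
  funext i
  fin_cases i
  · simp only [hF]
    simp [Fin.sum_univ_two]
    field_simp
    ring
  · simp only [hF]
    simp [Fin.sum_univ_two]
    field_simp
    linear_combination (1 - Complex.exp (Complex.I * τ)) * hl + (Complex.exp (Complex.I * τ) - 1) * hl

lemma eq_right_full (τ : ℝ) (ω l X Y A B : ℂ) (hl : l ^ 2 = 1 - ω ^ 2) :
    Complex.I • σ3.mulVec ((A * l * X) • ![Complex.exp (-(Complex.I * τ)), ω - Complex.I * l]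
        + (B * -l * Y) • ![Complex.exp (-(Complex.I * τ)), ω + Complex.I * l])
      + (σstar τ).mulVec ((A * X) • ![Complex.exp (-(Complex.I * τ)), ω - Complex.I * l]
        + (B * Y) • ![Complex.exp (-(Complex.I * τ)), ω + Complex.I * l])
      = ω • ((A * X) • ![Complex.exp (-(Complex.I * τ)), ω - Complex.I * l]
        + (B * Y) • ![Complex.exp (-(Complex.I * τ)), ω + Complex.I * l]) := by
  have hE : Complex.exp (Complex.I * τ) * Complex.exp (-(Complex.I * τ)) = 1 := by
    rw [← Complex.exp_add]; simp
  funext i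
  fin_cases i <;>
    simp [σstar, σ3, Matrix.mulVec, dotProduct, Fin.sum_univ_two] <;>
    first
      | ring1
      | linear_combination (l ^ 2 * (A * X + B * Y)) * Complex.I_sq
          - (A * X + B * Y) * hl + (A * X + B * Y) * hE

theorem stmt3 (τ : ℝ) (ω : ℂ) (hω : ω ∈ U) :
    Continuous (ηminus τ ω) ∧
    (∀ x : ℝ, x ≠ 0 → DifferentiableAt ℝ (ηminus τ ω) x) ∧
    (∀ x : ℝ, x < 0 →
      Complex.I • σ3.mulVec (deriv (ηminus τ ω) x) + σ1.mulVec (ηminus τ ω x)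
        = ω • ηminus τ ω x) ∧
    (∀ x : ℝ, 0 < x →
      Complex.I • σ3.mulVec (deriv (ηminus τ ω) x) + (σstar τ).mulVec (ηminus τ ω x)
        = ω • ηminus τ ω x) ∧
    Tendsto (ηminus τ ω) atBot (nhds 0) := by
  have hl := lam_sq hω
  have hlne := lam_ne hω
  have hre := lam_re_pos hω
  set v1 : Fin 2 → ℂ := ![1, ω - Complex.I * lam ω] with hv1
  set vp : Fin 2 → ℂ := ![Complex.exp (-(Complex.I * τ)), ω - Complex.I * lam ω] with hvp
  set vm : Fin 2 → ℂ := ![Complex.exp (-(Complex.I * τ)), ω + Complex.I * lam ω] with hvm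
  set C : ℂ := (ω * (Complex.exp (Complex.I * τ) - 1)
      + Complex.I * lam ω * (Complex.exp (Complex.I * τ) + 1)) / (2 * Complex.I * lam ω) with hC
  set D : ℂ := (1 - Complex.exp (Complex.I * τ)) * (ω - Complex.I * lam ω)
      / (2 * Complex.I * lam ω) with hD
  set g1 : ℝ → Fin 2 → ℂ := fun x => Complex.exp (lam ω * x) • v1 with hg1def
  set g2 : ℝ → Fin 2 → ℂ := fun x =>
    (C * Complex.exp (lam ω * x)) • vp + (D * Complex.exp (-(lam ω) * x)) • vm with hg2def
  have hfun : ∀ x : ℝ, ηminus τ ω x = if x ≤ 0 then g1 x else g2 x := fun x => rfl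
  -- derivatives of the two branches
  have hd1 : ∀ x : ℝ, HasDerivAt g1 ((lam ω * Complex.exp (lam ω * x)) • v1) x := by
    intro x
    have := hasDerivAt_aux 1 (lam ω) v1 x
    simpa [one_mul] using this
  have hd2 : ∀ x : ℝ, HasDerivAt g2
      ((C * lam ω * Complex.exp (lam ω * x)) • vp
        + (D * -(lam ω) * Complex.exp (-(lam ω) * x)) • vm) x := fun x =>
    (hasDerivAt_aux C (lam ω) vp x).add (hasDerivAt_aux D (-(lam ω)) vm x)
  -- eventual equalities near x < 0 and x > 0
  have hev1 : ∀ {x : ℝ}, x < 0 → ηminus τ ω =ᶠ[nhds x] g1 := by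
    intro x hx
    filter_upwards [Iio_mem_nhds hx] with y hy
    exact (hfun y).trans (if_pos hy.le)
  have hev2 : ∀ {x : ℝ}, 0 < x → ηminus τ ω =ᶠ[nhds x] g2 := by
    intro x hx
    filter_upwards [Ioi_mem_nhds hx] with y hy
    exact (hfun y).trans (if_neg (not_le.2 hy))
  have hmatch : g1 0 = g2 0 := by
    have h0 := match_aux τ ω hω
    simp only [hg1def, hg2def, Complex.ofReal_zero, mul_zero, neg_zero, Complex.exp_zero,
      one_smul, mul_one]
    exact h0.symm
  refine ⟨?_, ?_, ?_, ?_, ?_⟩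
  · -- continuity
    have hc1 : Continuous g1 := by
      apply Continuous.smul (f := fun x : ℝ => Complex.exp (lam ω * x)) (g := fun _ : ℝ => v1) _ continuous_const
      exact Complex.continuous_exp.comp (continuous_const.mul Complex.continuous_ofReal)
    have hc2 : Continuous g2 := by
      apply Continuous.add
      · apply Continuous.smul (f := fun x : ℝ => C * Complex.exp (lam ω * x)) (g := fun _ : ℝ => vp) _ continuous_const
        exact continuous_const.mul
          (Complex.continuous_exp.comp (continuous_const.mul Complex.continuous_ofReal))
      · apply Continuous.smul (f := fun x : ℝ => D * Complex.exp (-(lam ω) * x)) (g := fun _ : ℝ => vm) _ continuous_const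
        exact continuous_const.mul
          (Complex.continuous_exp.comp (continuous_const.mul Complex.continuous_ofReal))
    have : Continuous fun x : ℝ => if x ≤ (0 : ℝ) then g1 x else g2 x :=
      Continuous.if_le hc1 hc2 continuous_id continuous_const fun x hx => by
        rw [hx]; exact hmatch
    exact this.congr fun x => (hfun x).symm
  · -- differentiability away from 0
    intro x hx
    rcases lt_or_gt_of_ne hx with hx' | hx'
    · exact ((hd1 x).congr_of_eventuallyEq (hev1 hx')).differentiableAt
    · exact ((hd2 x).congr_of_eventuallyEq (hev2 hx')).differentiableAt
  · -- equation for x < 0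
    intro x hx
    rw [((hd1 x).congr_of_eventuallyEq (hev1 hx)).deriv, (hfun x), if_pos hx.le, hg1def]
    exact eq_left_aux ω (lam ω) (Complex.exp (lam ω * x)) hl
  · -- equation for x > 0
    intro x hx
    rw [((hd2 x).congr_of_eventuallyEq (hev2 hx)).deriv, (hfun x), if_neg (not_le.2 hx), hg2def]
    exact eq_right_full τ ω (lam ω) (Complex.exp (lam ω * x)) (Complex.exp (-(lam ω) * x))
      C D hl
  · -- decay at -∞
    have hexp : Tendsto (fun x : ℝ => Complex.exp (lam ω * x)) atBot (nhds 0) := by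
      rw [tendsto_zero_iff_norm_tendsto_zero]
      have hn : ∀ x : ℝ, ‖Complex.exp (lam ω * x)‖ = Real.exp ((lam ω).re * x) := by
        intro x
        rw [Complex.norm_exp]
        congr 1
        simp [Complex.mul_re]
      simp only [hn]
      exact Real.tendsto_exp_atBot.comp ((tendsto_const_mul_atBot_of_pos hre).2 tendsto_id)
    have h1 : Tendsto g1 atBot (nhds 0) := by
      have := hexp.smul_const v1
      simpa using this
    apply h1.congr'
    filter_upwards [eventually_le_atBot (0 : ℝ)] with y hy
    exact ((hfun y).trans (if_pos hy)).symm
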